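/- Let φ ∈ 𝒮(ℝ), r ∈ ℕ, l > 0, δ ∈ ℝ with |δ| ≤ l, and set Φ(t) = e^{-2πi δ t} · l·φ(l t). Let I be an interval with center τ₀ and let p_I(τ,t) be the Taylor polynomial in τ of degree r-1 of the function τ ↦ Φ(τ - t) around τ₀. Then for all τ ∈ I and t ∉ 2I: |Φ(τ - t) - p_I(τ,t)| ≤ C_r |I|^r / |t - τ₀|^{r+1}, where C_r depends only on φ and r (not on l, δ, I, or t). -/

import Mathlib

open Real



lemma my_itDW_eq {f : ℝ → ℂ} (hf : ContDiff ℝ (⊤ : ℕ∞) f) {s : Set ℝ} (hs : UniqueDiffOn ℝ s)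
    {x : ℝ} (hx : x ∈ s) (n : ℕ) : iteratedDerivWithin n f s x = iteratedDeriv n f x := by
  have h := (contDiff_iff_ftaylorSeries.mp hf).hasFTaylorSeriesUpToOn s
  have h2 := h.eq_iteratedFDerivWithin_of_uniqueDiffOn (m := n) (by exact_mod_cast le_top) hs hx
  rw [iteratedDerivWithin_eq_iteratedFDerivWithin, iteratedDeriv_eq_iteratedFDeriv, ← h2]
  rfl

lemma my_taylor_right {f : ℝ → ℂ} (hf : ContDiff ℝ (⊤ : ℕ∞) f) (r : ℕ) (hr : 1 ≤ r)
    {x₀ x M : ℝ} (hle : x₀ ≤ x)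
    (hM : ∀ y ∈ Set.Icc x₀ x, ‖iteratedDeriv r f y‖ ≤ M) :
    ‖f x - ∑ α ∈ Finset.range r,
        iteratedDeriv α f x₀ * ((x - x₀ : ℝ) : ℂ) ^ α / (α.factorial : ℂ)‖
      ≤ M * |x - x₀| ^ r := by
  have hM0 : 0 ≤ M := le_trans (norm_nonneg _) (hM x₀ ⟨le_refl _, hle⟩)
  rcases eq_or_lt_of_le hle with heq | hlt
  · subst heq
    have : ∑ α ∈ Finset.range r,
        iteratedDeriv α f x₀ * ((x₀ - x₀ : ℝ) : ℂ) ^ α / (α.factorial : ℂ) = f x₀ := by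
      rw [Finset.sum_eq_single 0]
      · simp
      · intro b _ hb
        simp [zero_pow hb]
      · intro h; exact absurd (Finset.mem_range.2 hr) h
    rw [this, sub_self, norm_zero, sub_self, abs_zero, zero_pow (by omega)]
    simp
  · obtain ⟨n, rfl⟩ : ∃ n, r = n + 1 := ⟨r - 1, (Nat.succ_pred_eq_of_pos hr).symm⟩
    have hu : UniqueDiffOn ℝ (Set.Icc x₀ x) := uniqueDiffOn_Icc hlt
    have hf' : ContDiffOn ℝ (n + 1) f (Set.Icc x₀ x) :=
      (hf.of_le (by exact_mod_cast le_top)).contDiffOn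
    have hC : ∀ y ∈ Set.Icc x₀ x,
        ‖iteratedDerivWithin (n + 1) f (Set.Icc x₀ x) y‖ ≤ M := fun y hy => by
      rw [my_itDW_eq hf hu hy]; exact hM y hy
    have hT := taylor_mean_remainder_bound hle hf' (Set.right_mem_Icc.2 hle) hC
    have hsum : taylorWithinEval f n (Set.Icc x₀ x) x₀ x
        = ∑ α ∈ Finset.range (n + 1),
            iteratedDeriv α f x₀ * ((x - x₀ : ℝ) : ℂ) ^ α / (α.factorial : ℂ) := by
      rw [taylor_within_apply]
      refine Finset.sum_congr rfl fun k _ => ?_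
      rw [my_itDW_eq hf hu (Set.left_mem_Icc.2 hle)]
      rw [Complex.real_smul]
      push_cast
      ring
    rw [hsum] at hT
    refine hT.trans ?_
    rw [abs_of_nonneg (sub_nonneg.2 hle)]
    exact div_le_self (mul_nonneg hM0 (pow_nonneg (sub_nonneg.2 hle) _))
      (by exact_mod_cast Nat.one_le_iff_ne_zero.2 n.factorial_ne_zero)

lemma my_taylor_bound {f : ℝ → ℂ} (hf : ContDiff ℝ (⊤ : ℕ∞) f) (r : ℕ) (hr : 1 ≤ r)
    {x₀ x M : ℝ} (hM : ∀ y ∈ Set.uIcc x₀ x, ‖iteratedDeriv r f y‖ ≤ M) :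
    ‖f x - ∑ α ∈ Finset.range r,
        iteratedDeriv α f x₀ * ((x - x₀ : ℝ) : ℂ) ^ α / (α.factorial : ℂ)‖
      ≤ M * |x - x₀| ^ r := by
  rcases le_total x₀ x with hle | hle
  · exact my_taylor_right hf r hr hle (fun y hy => hM y (by rwa [Set.uIcc_of_le hle]))
  · -- reflect
    set g : ℝ → ℂ := fun u => f (2 * x₀ - u) with hg
    have hgid : ∀ (α : ℕ) (a : ℝ), iteratedDeriv α g a
        = ((-1 : ℝ) ^ α) • iteratedDeriv α f (2 * x₀ - a) := by
      intro α a
      have h2 := iteratedDeriv_comp_neg α (fun v : ℝ => f (2 * x₀ + v)) a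
      rw [iteratedDeriv_comp_const_add] at h2
      have h3 : g = fun u : ℝ => f (2 * x₀ + -u) := funext fun u => by
        simp [hg, sub_eq_add_neg]
      rw [h3, sub_eq_add_neg]
      exact h2
    have hgsmooth : ContDiff ℝ (⊤ : ℕ∞) g :=
      hf.comp (contDiff_const.sub contDiff_id)
    have hle' : x₀ ≤ 2 * x₀ - x := by linarith
    have hM' : ∀ y ∈ Set.Icc x₀ (2 * x₀ - x), ‖iteratedDeriv r g y‖ ≤ M := by
      intro y hy
      rw [hgid, norm_smul]
      have : ‖(-1 : ℝ) ^ r‖ = 1 := by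
        rw [norm_pow, norm_neg, norm_one, one_pow]
      rw [this, one_mul]
      refine hM _ ?_
      rw [Set.mem_Icc] at hy
      rw [Set.uIcc_of_ge hle, Set.mem_Icc]
      obtain ⟨h1, h2⟩ := hy
      refine ⟨by linarith, by linarith⟩
    have hT := my_taylor_right hgsmooth r hr hle' hM'
    have e1 : g (2 * x₀ - x) = f x := by simp [hg]
    have e2 : ∀ α ∈ Finset.range r,
        iteratedDeriv α g x₀ * ((2 * x₀ - x - x₀ : ℝ) : ℂ) ^ α / (α.factorial : ℂ)
        = iteratedDeriv α f x₀ * ((x - x₀ : ℝ) : ℂ) ^ α / (α.factorial : ℂ) := by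
      intro α _
      have e3 : (2 * x₀ - x₀ : ℝ) = x₀ := by ring
      have e4 : ((2 * x₀ - x - x₀ : ℝ) : ℂ) = -((x - x₀ : ℝ) : ℂ) := by push_cast; ring
      rw [hgid, e3, Complex.real_smul, e4]
      rw [show (-((x - x₀ : ℝ) : ℂ)) ^ α = (-1 : ℂ) ^ α * ((x - x₀ : ℝ) : ℂ) ^ α from by
        rw [neg_pow]]
      rw [show ((((-1 : ℝ)) ^ α : ℝ) : ℂ) = (-1 : ℂ) ^ α from by push_cast; norm_num]
      have hone : ((-1 : ℂ)) ^ α * ((-1 : ℂ)) ^ α = 1 := by rw [← mul_pow]; norm_num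
      linear_combination (iteratedDeriv α f x₀ * ((x - x₀ : ℝ) : ℂ) ^ α / (α.factorial : ℂ)) * hone
    rw [e1, Finset.sum_congr rfl e2] at hT
    have e5 : |2 * x₀ - x - x₀| = |x - x₀| := by rw [abs_sub_comm]; congr 1; ring
    rwa [e5] at hT


lemma my_exp_ideriv (c : ℂ) (n : ℕ) :
    iteratedDeriv n (fun u : ℝ => Complex.exp (c * u)) = fun x : ℝ => c ^ n * Complex.exp (c * x) := by
  induction n with
  | zero => simp
  | succ n ih =>
    funext x
    have hd : HasDerivAt (fun u : ℝ => Complex.exp (c * u)) (Complex.exp (c * x) * c) x := by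
      have : HasDerivAt (fun w : ℂ => Complex.exp (c * w)) (Complex.exp (c * (x:ℂ)) * c) (x:ℂ) :=
        ((hasDerivAt_id ((x:ℝ):ℂ)).const_mul c).cexp.congr_deriv (by simp [mul_comm])
      exact this.comp_ofReal
    rw [iteratedDeriv_succ, ih]
    have : deriv (fun x : ℝ => c ^ n * Complex.exp (c * x)) x
        = c ^ n * (Complex.exp (c * x) * c) := by
      rw [deriv_const_mul _ hd.differentiableAt, hd.deriv]
    rw [this]; ring

lemma my_phi_bound (φ : SchwartzMap ℝ ℂ) (r : ℕ) :
    ∃ C : ℝ, 0 ≤ C ∧ ∀ (l δ : ℝ), 0 < l → |δ| ≤ l → ∀ u : ℝ, u ≠ 0 →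
      ‖iteratedDeriv r (fun u : ℝ => Complex.exp (-(2 * π * Complex.I * δ * u)) *
          ((l : ℂ) * φ (l * u))) u‖ ≤ C / |u| ^ (r + 1) := by
  classical
  set D : ℕ → ℝ := fun m => (φ.decay (r + 1) m).choose with hDdef
  have hD : ∀ m, 0 < D m ∧ ∀ x, ‖x‖ ^ (r + 1) * ‖iteratedFDeriv ℝ m φ x‖ ≤ D m :=
    fun m => (φ.decay (r + 1) m).choose_spec
  set Cφ : ℝ := ∑ m ∈ Finset.range (r + 1), D m with hCφdef
  have hCφ : ∀ m ∈ Finset.range (r + 1), D m ≤ Cφ :=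
    fun m hm => Finset.single_le_sum (fun i _ => (hD i).1.le) hm
  have hCφ0 : 0 ≤ Cφ := Finset.sum_nonneg fun i _ => (hD i).1.le
  refine ⟨(2 * π + 1) ^ r * Cφ, by positivity, ?_⟩
  intro l δ hl hδ u hu
  set c : ℂ := -(2 * π * Complex.I * δ) with hc
  -- decay bound
  have hdecay : ∀ m ∈ Finset.range (r + 1), ∀ v : ℝ, v ≠ 0 →
      ‖iteratedDeriv m φ v‖ ≤ Cφ / |v| ^ (r + 1) := by
    intro m hm v hv
    rw [← norm_iteratedFDeriv_eq_norm_iteratedDeriv]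
    rw [le_div_iff₀ (by positivity)]
    calc ‖iteratedFDeriv ℝ m φ v‖ * |v| ^ (r + 1)
        = ‖v‖ ^ (r + 1) * ‖iteratedFDeriv ℝ m φ v‖ := by
          rw [Real.norm_eq_abs]; ring
      _ ≤ D m := (hD m).2 v
      _ ≤ Cφ := hCφ m hm
  -- the two factors
  set f : ℝ → ℂ := fun u : ℝ => Complex.exp (c * u) with hf
  set g : ℝ → ℂ := fun u : ℝ => (l : ℂ) * φ (l * u) with hgdef
  have hΦ : (fun u : ℝ => Complex.exp (-(2 * π * Complex.I * δ * u)) * ((l : ℂ) * φ (l * u)))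
      = fun y : ℝ => f y * g y := by
    funext y; rw [hf, hgdef]; simp only [hc]; ring_nf
  have hfs : ContDiff ℝ (⊤ : ℕ∞) f := by
    exact Complex.contDiff_exp.comp (contDiff_const.mul Complex.ofRealCLM.contDiff)
  have hgs : ContDiff ℝ (⊤ : ℕ∞) g := by
    exact contDiff_const.mul ((φ.smooth ⊤).comp (contDiff_const.mul contDiff_id))
  -- norm of iterated derivs of f
  have hcabs : ‖c‖ = 2 * π * |δ| := by
    rw [hc]
    rw [norm_neg]
    simp [norm_mul, Complex.norm_real, abs_of_pos pi_pos]
  have hfd : ∀ (i : ℕ) (x : ℝ), ‖iteratedDeriv i f x‖ = (2 * π * |δ|) ^ i := by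
    intro i x
    rw [hf, my_exp_ideriv c i, norm_mul, norm_pow, hcabs]
    have : ‖Complex.exp (c * x)‖ = 1 := by
      rw [Complex.norm_exp]
      have : (c * (x : ℂ)).re = 0 := by
        rw [hc]
        simp [Complex.mul_re, Complex.mul_im]
      rw [this, Real.exp_zero]
    rw [this, mul_one]
  -- norm of iterated derivs of g
  have hgd : ∀ (m : ℕ) (x : ℝ),
      ‖iteratedDeriv m g x‖ = l ^ (m + 1) * ‖iteratedDeriv m φ (l * x)‖ := by
    intro m x
    have e1 : g = fun u : ℝ => (l : ℝ) • ((fun v : ℝ => φ (l * v)) u) := by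
      funext v; rw [hgdef]; simp [Complex.real_smul]
    have e2 : iteratedDeriv m g x = (l : ℝ) • iteratedDeriv m (fun v : ℝ => φ (l * v)) x := by
      rw [e1, ← iteratedDerivWithin_univ, ← iteratedDerivWithin_univ]
      exact iteratedDerivWithin_const_smul (Set.mem_univ x) uniqueDiffOn_univ (l : ℝ)
        ((((φ.smooth ⊤).comp (contDiff_const.mul contDiff_id)).of_le (by exact_mod_cast le_top)).contDiffWithinAt)
    have e3 : iteratedDeriv m (fun v : ℝ => φ (l * v)) x = l ^ m • iteratedDeriv m φ (l * x) := by
      have := iteratedDeriv_comp_const_smul (n := m) (f := fun v : ℝ => φ v) ((φ.smooth ⊤).of_le (by exact_mod_cast le_top)) l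
      exact congrFun this x
    rw [e2, e3, norm_smul, norm_smul, Real.norm_eq_abs, Real.norm_eq_abs,
      abs_of_pos hl, abs_of_pos (pow_pos hl m)]
    ring
  -- Leibniz
  have hL := norm_iteratedFDeriv_mul_le (𝕜 := ℝ) (n := r) hfs hgs u (by exact_mod_cast le_top)
  rw [← hΦ] at hL
  rw [norm_iteratedFDeriv_eq_norm_iteratedDeriv] at hL
  refine hL.trans ?_
  have hterm : ∀ i ∈ Finset.range (r + 1),
      (r.choose i : ℝ) * ‖iteratedFDeriv ℝ i f u‖ * ‖iteratedFDeriv ℝ (r - i) g u‖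
        ≤ (r.choose i : ℝ) * (2 * π) ^ i * Cφ / |u| ^ (r + 1) := by
    intro i hi
    have hir : i < r + 1 := Finset.mem_range.1 hi
    rw [norm_iteratedFDeriv_eq_norm_iteratedDeriv, norm_iteratedFDeriv_eq_norm_iteratedDeriv,
      hfd, hgd]
    have h1 : ‖iteratedDeriv (r - i) (⇑φ) (l * u)‖ ≤ Cφ / (l ^ (r + 1) * |u| ^ (r + 1)) := by
      have := hdecay (r - i) (Finset.mem_range.2 (by omega)) (l * u) (mul_ne_zero hl.ne' hu)
      rwa [abs_mul, abs_of_pos hl, mul_pow] at this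
    have hii : i + (r - i + 1) = r + 1 := by omega
    calc (r.choose i : ℝ) * (2 * π * |δ|) ^ i * (l ^ (r - i + 1) * ‖iteratedDeriv (r - i) (⇑φ) (l * u)‖)
        ≤ (r.choose i : ℝ) * (2 * π * l) ^ i *
            (l ^ (r - i + 1) * (Cφ / (l ^ (r + 1) * |u| ^ (r + 1)))) := by
          gcongr
      _ = (r.choose i : ℝ) * (2 * π) ^ i * Cφ / |u| ^ (r + 1) := by
          have key : l ^ i * (l ^ (r - i + 1) * (Cφ / (l ^ (r + 1) * |u| ^ (r + 1))))
              = Cφ / |u| ^ (r + 1) := by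
            rw [← mul_assoc, ← pow_add, hii]
            field_simp
          rw [mul_pow (2 * π) l i]
          calc (r.choose i : ℝ) * ((2 * π) ^ i * l ^ i) *
                (l ^ (r - i + 1) * (Cφ / (l ^ (r + 1) * |u| ^ (r + 1))))
              = (r.choose i : ℝ) * (2 * π) ^ i *
                (l ^ i * (l ^ (r - i + 1) * (Cφ / (l ^ (r + 1) * |u| ^ (r + 1))))) := by ring
            _ = (r.choose i : ℝ) * (2 * π) ^ i * (Cφ / |u| ^ (r + 1)) := by rw [key]
            _ = (r.choose i : ℝ) * (2 * π) ^ i * Cφ / |u| ^ (r + 1) := by ring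
  refine (Finset.sum_le_sum hterm).trans (le_of_eq ?_)
  have hpow : ((2 * π + 1) : ℝ) ^ r = ∑ i ∈ Finset.range (r + 1), (r.choose i : ℝ) * (2 * π) ^ i := by
    rw [add_pow]
    refine Finset.sum_congr rfl fun i _ => by rw [one_pow]; ring
  rw [hpow, Finset.sum_mul, Finset.sum_div]
  try exact Finset.sum_congr rfl fun i _ => by ring


/-- Kernel smoothness for the tweaking operator: with `Φ(t) = e^{-2πiδt} l φ(lt)`,
`0 < l`, `|δ| ≤ l`, and `p_I(τ,t)` the degree-`(r-1)` Taylor polynomial in `τ` of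
`τ ↦ Φ(τ-t)` around the center `τ₀` of `I`, one has for `τ ∈ I` and `t ∉ 2I`:
`|Φ(τ-t) - p_I(τ,t)| ≤ C_r |I|^r / |t-τ₀|^{r+1}` with `C_r = C(φ,r)`. -/
theorem stmt14 (φ : SchwartzMap ℝ ℂ) (r : ℕ) (hr : 1 ≤ r) :
    ∃ C : ℝ, ∀ (l δ : ℝ), 0 < l → |δ| ≤ l → ∀ (τ₀ ρ : ℝ), 0 < ρ →
      ∀ τ ∈ Set.Icc (τ₀ - ρ) (τ₀ + ρ), ∀ t ∉ Set.Icc (τ₀ - 2 * ρ) (τ₀ + 2 * ρ),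
      ‖(fun u : ℝ => Complex.exp (-(2 * π * Complex.I * δ * u)) * ((l : ℂ) * φ (l * u)))
            (τ - t) -
          ∑ α ∈ Finset.range r,
            iteratedDeriv α
              (fun u : ℝ => Complex.exp (-(2 * π * Complex.I * δ * u)) *
                ((l : ℂ) * φ (l * u))) (τ₀ - t) *
              ((τ - τ₀ : ℝ) : ℂ) ^ α / (α.factorial : ℂ)‖ ≤
        C * (2 * ρ) ^ r / |t - τ₀| ^ (r + 1) := by
  obtain ⟨C, hC0, hC⟩ := my_phi_bound φ r
  refine ⟨2 * C, ?_⟩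
  intro l δ hl hδ τ₀ ρ hρ τ hτ t ht
  set Φ : ℝ → ℂ := fun u : ℝ =>
    Complex.exp (-(2 * π * Complex.I * δ * u)) * ((l : ℂ) * φ (l * u)) with hΦdef
  have hΦs : ContDiff ℝ (⊤ : ℕ∞) Φ := by
    rw [hΦdef]
    exact (Complex.contDiff_exp.comp
        ((contDiff_const.mul Complex.ofRealCLM.contDiff).neg)).mul
      (contDiff_const.mul ((φ.smooth ⊤).comp (contDiff_const.mul contDiff_id)))
  have hFs : ContDiff ℝ (⊤ : ℕ∞) (fun u : ℝ => Φ (u - t)) :=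
    hΦs.comp (contDiff_id.sub contDiff_const)
  have hd : 2 * ρ < |t - τ₀| := by
    rw [Set.mem_Icc] at ht; push_neg at ht
    rcases lt_or_ge t (τ₀ - 2 * ρ) with h | h
    · rw [abs_sub_comm, abs_of_pos (by linarith)]; linarith
    · have h2 := ht h
      rw [abs_of_pos (by linarith)]; linarith
  set d := |t - τ₀| with hdd
  have hd0 : 0 < d := lt_trans (by linarith) hd
  have hshift : ∀ (n : ℕ) (y : ℝ),
      iteratedDeriv n (fun u : ℝ => Φ (u - t)) y = iteratedDeriv n Φ (y - t) := by
    intro n y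
    have h1 : (fun u : ℝ => Φ (u - t)) = fun u : ℝ => Φ (u + (-t)) := by
      funext u; rw [sub_eq_add_neg]
    rw [h1, iteratedDeriv_comp_add_const]
    show iteratedDeriv n Φ (y + -t) = iteratedDeriv n Φ (y - t)
    rw [sub_eq_add_neg]
  set M := C * 2 ^ (r + 1) / d ^ (r + 1) with hM
  have hMb : ∀ y ∈ Set.uIcc τ₀ τ, ‖iteratedDeriv r (fun u : ℝ => Φ (u - t)) y‖ ≤ M := by
    intro y hy
    have hy' : τ₀ - ρ ≤ y ∧ y ≤ τ₀ + ρ := by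
      rcases le_total τ₀ τ with h | h
      · rw [Set.uIcc_of_le h, Set.mem_Icc] at hy
        exact ⟨by linarith [hy.1], by linarith [hy.2, hτ.2]⟩
      · rw [Set.uIcc_of_ge h, Set.mem_Icc] at hy
        exact ⟨by linarith [hy.1, hτ.1], by linarith [hy.2]⟩
    have h1 : |y - τ₀| ≤ ρ := abs_le.2 ⟨by linarith [hy'.1], by linarith [hy'.2]⟩
    have hyt : d / 2 ≤ |y - t| := by
      have h2 : |t - τ₀| ≤ |t - y| + |y - τ₀| := abs_sub_le t y τ₀
      rw [abs_sub_comm t y] at h2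
      rw [hdd] at hd ⊢
      linarith
    have hpos : (0 : ℝ) < |y - t| := lt_of_lt_of_le (by positivity) hyt
    rw [hshift]
    refine (hC l δ hl hδ (y - t) (abs_pos.mp hpos)).trans ?_
    have h3 : C / |y - t| ^ (r + 1) ≤ C / (d / 2) ^ (r + 1) := by gcongr
    refine h3.trans (le_of_eq ?_)
    rw [hM, div_pow]
    field_simp
    try ring
  have hT := my_taylor_bound hFs r hr (x₀ := τ₀) (x := τ) hMb
  have hsum : ∀ α ∈ Finset.range r,
      iteratedDeriv α (fun u : ℝ => Φ (u - t)) τ₀ * ((τ - τ₀ : ℝ) : ℂ) ^ α / (α.factorial : ℂ)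
      = iteratedDeriv α Φ (τ₀ - t) * ((τ - τ₀ : ℝ) : ℂ) ^ α / (α.factorial : ℂ) := by
    intro α _
    rw [hshift]
  rw [Finset.sum_congr rfl hsum] at hT
  have hfin : M * |τ - τ₀| ^ r ≤ 2 * C * (2 * ρ) ^ r / d ^ (r + 1) := by
    have h1 : |τ - τ₀| ≤ ρ := abs_le.2 ⟨by linarith [hτ.1], by linarith [hτ.2]⟩
    calc M * |τ - τ₀| ^ r ≤ M * ρ ^ r := by
          rw [hM]
          gcongr
          try exact abs_nonneg _
      _ = 2 * C * (2 * ρ) ^ r / d ^ (r + 1) := by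
          rw [hM, mul_pow]
          field_simp
          try ring
  exact hT.trans hfin
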